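/- Differentiability of the p-th power in L^1: let (X, μ) be a measure space, p ∈ (1,∞), t ≥ 0, and let u : [0,∞) → L^p(μ) and w ∈ L^p(μ) satisfy ‖ (u(t+h) − u(t))/h − w ‖_{L^p(μ)} → 0 as h → 0 (with t+h ≥ 0). Then ‖ (|u(t+h)|^p − |u(t)|^p)/h − p · u(t)^⟨p−1⟩ w ‖_{L^1(μ)} → 0 as h → 0; that is, the L^1-valued function s ↦ |u(s)|^p is differentiable at t with derivative p u(t)^⟨p−1⟩ w. -/

import Mathlib

open MeasureTheory Real Filter Topology
open scoped ENNReal NNReal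

noncomputable section

/-- The signed power `a^⟨k⟩ := |a|^k sgn a` (with `0^k := 0`). -/
def sgnPow (a k : ℝ) : ℝ := |a| ^ k * Real.sign a

/-- The Bregman divergence `F_p(a,b) := |b|^p - |a|^p - p a^⟨p-1⟩ (b-a)`. -/
def bregmanF (p a b : ℝ) : ℝ := |b| ^ p - |a| ^ p - p * sgnPow a (p - 1) * (b - a)

/-- The constant `A_{d,-α} = 2^α Γ((d+α)/2) π^{-d/2} / |Γ(-α/2)|`. -/
def coefA (d : ℕ) (α : ℝ) : ℝ :=
  2 ^ α * Real.Gamma (((d : ℝ) + α) / 2) * Real.pi ^ (-(d : ℝ) / 2) / |Real.Gamma (-α / 2)|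

/-- The kernel `ν(x,y) = A_{d,-α} |x-y|^{-d-α}` of the fractional Laplacian. -/
def nuK (d : ℕ) (α : ℝ) (x y : EuclideanSpace ℝ (Fin d)) : ℝ :=
  coefA d α * ‖x - y‖ ^ (-(d : ℝ) - α)

/-- The Hardy constant `κ_β`.  Note that `Real.Gamma 0 = 0` and division by `0` is `0`
in Lean, so this formula automatically gives `κ_0 = 0` and `κ_{d-α} = 0`. -/
def kappaC (d : ℕ) (α β : ℝ) : ℝ :=
  2 ^ α * Real.Gamma ((β + α) / 2) * Real.Gamma (((d : ℝ) - β) / 2) /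
    (Real.Gamma (β / 2) * Real.Gamma (((d : ℝ) - β - α) / 2))

/-- The Sobolev–Bregman form `E_p[u]`, an element of `[0,∞]`
(the integrand is nonnegative). -/
def formEp (d : ℕ) (α p : ℝ) (u : EuclideanSpace ℝ (Fin d) → ℝ) : ℝ≥0∞ :=
  (1 / 2) * ∫⁻ x, ∫⁻ y, ENNReal.ofReal
    ((u x - u y) * (sgnPow (u x) (p - 1) - sgnPow (u y) (p - 1)) * nuK d α x y)

/-- The Hardy integral `∫ |u(x)|^p |x|^{-α} dx`, an element of `[0,∞]`. -/
def hardyI (d : ℕ) (α p : ℝ) (u : EuclideanSpace ℝ (Fin d) → ℝ) : ℝ≥0∞ :=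
  ∫⁻ x, ENNReal.ofReal (|u x| ^ p * ‖x‖ ^ (-α))

end

section AuxLemmas

open Set

lemma ofReal_norm_eq_coe_nnnorm (a : ℝ) : ENNReal.ofReal ‖a‖ = (‖a‖₊ : ℝ≥0∞) := by
  rw [← coe_nnnorm, ENNReal.ofReal_coe_nnreal]

protected lemma AEMeasurable.ennnorm {β : Type*} [MeasurableSpace β] {μ : Measure β} {f : β → ℝ}
    (hf : AEMeasurable f μ) : AEMeasurable (fun x => (‖f x‖₊ : ℝ≥0∞)) μ := hf.enorm

lemma eLpNorm_eq_lintegral_rpow_nnnorm {β : Type*} [MeasurableSpace β] {μ : Measure β}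
    {f : β → ℝ} {p : ℝ≥0∞} (hp0 : p ≠ 0) (hpt : p ≠ ⊤) :
    eLpNorm f p μ = (∫⁻ x, (‖f x‖₊ : ℝ≥0∞) ^ p.toReal ∂μ) ^ (1 / p.toReal) :=
  eLpNorm_eq_lintegral_rpow_enorm_toReal hp0 hpt

lemma eLpNorm_one_eq_lintegral_nnnorm {β : Type*} [MeasurableSpace β] {μ : Measure β}
    {f : β → ℝ} : eLpNorm f 1 μ = ∫⁻ x, (‖f x‖₊ : ℝ≥0∞) ∂μ :=
  eLpNorm_one_eq_lintegral_enorm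

lemma eventually_le_of_tendsto_lt {β : Type*} {l : Filter β} {f : β → ℝ≥0∞} {u v : ℝ≥0∞}
    (hv : v < u) (h : Tendsto f l (𝓝 v)) : ∀ᶠ a in l, f a ≤ u :=
  (h.eventually (gt_mem_nhds hv)).mono fun _ h => h.le

lemma mul_le_mul_left' {b c : ℝ≥0∞} (h : b ≤ c) (a : ℝ≥0∞) : a * b ≤ a * c := by
  gcongr

lemma sgnPow_zero' (k : ℝ) : sgnPow 0 k = 0 := by simp [sgnPow, Real.sign_zero]

lemma sgnPow_of_pos {a : ℝ} (ha : 0 < a) (k : ℝ) : sgnPow a k = a ^ k := by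
  simp [sgnPow, Real.sign_of_pos ha, abs_of_pos ha]

lemma sgnPow_of_neg {a : ℝ} (ha : a < 0) (k : ℝ) : sgnPow a k = -(-a) ^ k := by
  simp [sgnPow, Real.sign_of_neg ha, abs_of_neg ha]

lemma sgnPow_nonneg {a : ℝ} (ha : 0 ≤ a) (k : ℝ) (hk : 0 < k) : sgnPow a k = a ^ k := by
  rcases eq_or_lt_of_le ha with h | h
  · rw [← h, sgnPow_zero', Real.zero_rpow hk.ne']
  · exact sgnPow_of_pos h k

lemma sgnPow_neg_arg (a k : ℝ) : sgnPow (-a) k = -sgnPow a k := by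
  simp [sgnPow, Real.sign_neg]

lemma abs_sgnPow_le (a k : ℝ) : |sgnPow a k| ≤ |a| ^ k := by
  rw [sgnPow, abs_mul, abs_of_nonneg (Real.rpow_nonneg (abs_nonneg a) k)]
  calc |a| ^ k * |Real.sign a| ≤ |a| ^ k * 1 := by
        gcongr
        rcases lt_trichotomy a 0 with h | h | h
        · simp [Real.sign_of_neg h]
        · simp [h, Real.sign_zero]
        · simp [Real.sign_of_pos h]
    _ = |a| ^ k := mul_one _

lemma sgnPow_eq (a k : ℝ) : sgnPow a k = |a| ^ (k - 1) * a := by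
  rcases eq_or_ne a 0 with rfl | ha
  · simp [sgnPow, Real.sign_zero]
  · rw [sgnPow]
    have habs : (0:ℝ) < |a| := abs_pos.mpr ha
    have : |a| ^ k = |a| ^ (k - 1) * |a| := by
      rw [← Real.rpow_add_one habs.ne' (k-1)]; ring_nf
    rw [this]
    rcases lt_or_gt_of_ne ha with h | h
    · rw [Real.sign_of_neg h, abs_of_neg h]; ring
    · rw [Real.sign_of_pos h, abs_of_pos h]; ring

lemma tendsto_abs_rpow_zero {r : ℝ} (hr : 0 < r) :
    Tendsto (fun y : ℝ => |y| ^ r) (𝓝 0) (𝓝 0) := by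
  have h1 : ContinuousAt (fun x : ℝ => x ^ r) 0 :=
    Real.continuousAt_rpow_const 0 r (Or.inr hr.le)
  have h2 : Tendsto (fun y : ℝ => |y|) (𝓝 0) (𝓝 (0:ℝ)) := by
    simpa using continuous_abs.tendsto (0:ℝ)
  have := h1.tendsto.comp h2
  simpa [Function.comp_def, Real.zero_rpow hr.ne'] using this

lemma hasDerivAt_abs_rpow' {p : ℝ} (hp : 1 < p) (x : ℝ) :
    HasDerivAt (fun y : ℝ => |y| ^ p) (p * sgnPow x (p - 1)) x := by
  have := hasDerivAt_abs_rpow x hp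
  rw [sgnPow_eq]
  convert this using 1
  ring_nf

lemma hasDerivAt_sgnPow {q : ℝ} (hq : 1 ≤ q) (x : ℝ) :
    HasDerivAt (fun y : ℝ => sgnPow y q) (q * |x| ^ (q - 1)) x := by
  simp only [sgnPow_eq]
  rcases eq_or_lt_of_le hq with rfl | hq1
  · simp only [sub_self, Real.rpow_zero, one_mul]
    exact hasDerivAt_id x
  rcases lt_trichotomy x 0 with hx | hx | hx
  · -- reduce to positive case via oddness
    have hpos : HasDerivAt (fun y : ℝ => |y| ^ (q - 1) * y) (q * |(-x)| ^ (q - 1)) (-x) := by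
      have h0 : HasDerivAt (fun y : ℝ => y ^ q) (q * (-x) ^ (q - 1)) (-x) :=
        Real.hasDerivAt_rpow_const (Or.inl (by linarith))
      have he : (fun y : ℝ => |y| ^ (q - 1) * y) =ᶠ[𝓝 (-x)] fun y => y ^ q := by
        filter_upwards [Ioi_mem_nhds (by linarith : (0:ℝ) < -x)] with y hy
        rw [abs_of_pos hy, ← Real.rpow_add_one (ne_of_gt hy) (q-1)]; ring_nf
      have := h0.congr_of_eventuallyEq he
      rw [abs_of_pos (by linarith : (0:ℝ) < -x)]
      exact this
    have hcomp : HasDerivAt (fun y : ℝ => -(|(-y)| ^ (q - 1) * (-y))) (q * |(-x)| ^ (q-1)) x := by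
      have := ((hpos.comp x (hasDerivAt_neg x)).neg)
      exact this.congr_deriv (by ring)
    have he2 : (fun y : ℝ => |y| ^ (q - 1) * y) = fun y : ℝ => -(|(-y)| ^ (q - 1) * (-y)) := by
      funext y; rw [abs_neg]; ring
    rw [he2, abs_neg] at *
    exact hcomp
  · subst hx
    rw [hasDerivAt_iff_tendsto_slope]
    have hval : q * |(0:ℝ)| ^ (q - 1) = 0 := by
      rw [abs_zero, Real.zero_rpow (by linarith : q - 1 ≠ 0), mul_zero]
    rw [hval]
    have he : ∀ᶠ y in 𝓝[≠] (0:ℝ), |y| ^ (q - 1) = slope (fun y : ℝ => |y| ^ (q-1) * y) 0 y := by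
      filter_upwards [self_mem_nhdsWithin] with y hy
      have hy' : y ≠ 0 := hy
      rw [slope_def_field]
      field_simp
      simp
    refine Tendsto.congr' he ?_
    exact (tendsto_abs_rpow_zero (by linarith)).mono_left nhdsWithin_le_nhds
  · have h0 : HasDerivAt (fun y : ℝ => y ^ q) (q * x ^ (q - 1)) x :=
      Real.hasDerivAt_rpow_const (Or.inl hx.ne')
    have he : (fun y : ℝ => |y| ^ (q - 1) * y) =ᶠ[𝓝 x] fun y => y ^ q := by
      filter_upwards [Ioi_mem_nhds hx] with y hy
      rw [abs_of_pos hy, ← Real.rpow_add_one (ne_of_gt hy) (q-1)]; ring_nf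
    have := h0.congr_of_eventuallyEq he
    rw [abs_of_pos hx]
    exact this

lemma abs_sub_le_of_mem_uIcc {x y z : ℝ} (hz : z ∈ Set.uIcc x y) : |z - x| ≤ |y - x| := by
  rw [Set.mem_uIcc] at hz
  rw [abs_sub_le_iff]
  rcases hz with ⟨h1, h2⟩ | ⟨h1, h2⟩ <;>
    constructor <;> nlinarith [le_abs_self (y - x), neg_le_abs (y - x), abs_nonneg (y - x)]

-- subadditivity of rpow for exponents in (0,1]
lemma real_rpow_add_le {q : ℝ} (hq0 : 0 ≤ q) (hq1 : q ≤ 1) {s t : ℝ} (hs : 0 ≤ s) (ht : 0 ≤ t) :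
    (s + t) ^ q ≤ s ^ q + t ^ q := by
  have h := NNReal.rpow_add_le_add_rpow (s.toNNReal) (t.toNNReal) hq0 hq1
  have h2 : ((s.toNNReal + t.toNNReal : ℝ≥0) : ℝ) ^ q ≤ ((s.toNNReal) : ℝ) ^ q + ((t.toNNReal) : ℝ) ^ q := by
    rw [← NNReal.coe_rpow, ← NNReal.coe_rpow, ← NNReal.coe_rpow]
    exact_mod_cast h
  simpa [Real.coe_toNNReal s hs, Real.coe_toNNReal t ht] using h2

lemma sgnPow_sub_le_aux {q : ℝ} (hq0 : 0 < q) (hq1 : q ≤ 1) {x y : ℝ} (hyx : y ≤ x)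
    (hx : 0 ≤ x) : |sgnPow x q - sgnPow y q| ≤ 2 * |x - y| ^ q := by
  have hxy0 : 0 ≤ x - y := by linarith
  rcases le_or_gt 0 y with hy | hy
  · rw [sgnPow_nonneg hx q hq0, sgnPow_nonneg hy q hq0]
    have hmono : y ^ q ≤ x ^ q := Real.rpow_le_rpow hy hyx hq0.le
    rw [abs_of_nonneg (by linarith), abs_of_nonneg hxy0]
    have hsub : x ^ q ≤ (x - y) ^ q + y ^ q := by
      have h := real_rpow_add_le hq0.le hq1 hxy0 hy
      calc x ^ q = ((x - y) + y) ^ q := by ring_nf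
        _ ≤ (x - y) ^ q + y ^ q := h
    nlinarith [Real.rpow_nonneg hxy0 q]
  · -- y < 0 ≤ x
    rw [sgnPow_nonneg hx q hq0]
    have h1 : sgnPow y q = -((-y) ^ q) := by
      have h2 := sgnPow_neg_arg (-y) q
      rw [neg_neg] at h2
      rw [h2, sgnPow_nonneg (by linarith : (0:ℝ) ≤ -y) q hq0]
    rw [h1, sub_neg_eq_add,
      abs_of_nonneg (add_nonneg (Real.rpow_nonneg hx q) (Real.rpow_nonneg (by linarith) q)),
      abs_of_nonneg hxy0]
    have hxle : x ^ q ≤ (x - y) ^ q := Real.rpow_le_rpow hx (by linarith) hq0.le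
    have hyle : (-y) ^ q ≤ (x - y) ^ q := Real.rpow_le_rpow (by linarith) (by linarith) hq0.le
    linarith

lemma sgnPow_sub_le_aux2 {q : ℝ} (hq0 : 0 < q) (hq1 : q ≤ 1) {x y : ℝ} (hyx : y ≤ x) :
    |sgnPow x q - sgnPow y q| ≤ 2 * |x - y| ^ q := by
  rcases le_or_gt 0 x with hx | hx
  · exact sgnPow_sub_le_aux hq0 hq1 hyx hx
  · have h1 : sgnPow x q = -sgnPow (-x) q := by rw [sgnPow_neg_arg]; ring
    have h2 : sgnPow y q = -sgnPow (-y) q := by rw [sgnPow_neg_arg]; ring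
    rw [h1, h2, show -sgnPow (-x) q - -sgnPow (-y) q = sgnPow (-y) q - sgnPow (-x) q by ring]
    have h3 := sgnPow_sub_le_aux hq0 hq1 (by linarith : -x ≤ -y) (by linarith : (0:ℝ) ≤ -y)
    calc |sgnPow (-y) q - sgnPow (-x) q| ≤ 2 * |(-y) - (-x)| ^ q := h3
      _ = 2 * |x - y| ^ q := by rw [show (-y) - (-x) = x - y by ring]

lemma sgnPow_sub_le {q : ℝ} (hq0 : 0 < q) (hq1 : q ≤ 1) (x y : ℝ) :
    |sgnPow x q - sgnPow y q| ≤ 2 * |x - y| ^ q := by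
  rcases le_total y x with h | h
  · exact sgnPow_sub_le_aux2 hq0 hq1 h
  · have h2 := sgnPow_sub_le_aux2 hq0 hq1 h
    rw [abs_sub_comm, show |x - y| = |y - x| from abs_sub_comm x y]
    exact h2

lemma sgnPow_sub_le' {q : ℝ} (hq : 1 ≤ q) (x y : ℝ) :
    |sgnPow x q - sgnPow y q| ≤ q * (|x| + |y - x|) ^ (q - 1) * |y - x| := by
  have key := Convex.norm_image_sub_le_of_norm_hasDerivWithin_le
    (f := fun z : ℝ => sgnPow z q) (f' := fun z : ℝ => q * |z| ^ (q - 1))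
    (s := Set.uIcc x y) (C := q * (|x| + |y - x|) ^ (q - 1))
    (fun z _ => (hasDerivAt_sgnPow hq z).hasDerivWithinAt)
    (fun z hz => ?_) (convex_uIcc x y) Set.left_mem_uIcc Set.right_mem_uIcc
  · rw [Real.norm_eq_abs, Real.norm_eq_abs] at key
    rw [abs_sub_comm]
    exact key
  · rw [Real.norm_eq_abs, abs_of_nonneg (by positivity)]
    have hz1 : |z| ≤ |x| + |y - x| := by
      have h1 : |z - x| ≤ |y - x| := abs_sub_le_of_mem_uIcc hz
      have := abs_sub_abs_le_abs_sub z x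
      linarith
    exact mul_le_mul_of_nonneg_left
      (Real.rpow_le_rpow (abs_nonneg z) hz1 (by linarith)) (by linarith : (0:ℝ) ≤ q)

lemma bregmanF_exists_mvt {p : ℝ} (hp : 1 < p) (a b : ℝ) :
    ∃ c ∈ Set.uIcc a b,
      bregmanF p a b = p * (sgnPow c (p - 1) - sgnPow a (p - 1)) * (b - a) := by
  have hcont : Continuous (fun y : ℝ => |y| ^ p) :=
    continuous_iff_continuousAt.mpr fun y => (hasDerivAt_abs_rpow' hp y).continuousAt
  rcases lt_trichotomy a b with hab | hab | hab
  · obtain ⟨c, hc, hcs⟩ := exists_hasDerivAt_eq_slope (fun y : ℝ => |y| ^ p)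
      (fun y => p * sgnPow y (p - 1)) hab hcont.continuousOn
      (fun y _ => hasDerivAt_abs_rpow' hp y)
    refine ⟨c, Set.Icc_subset_uIcc (Set.Ioo_subset_Icc_self hc), ?_⟩
    have hba : b - a ≠ 0 := sub_ne_zero.mpr hab.ne'
    rw [bregmanF]
    field_simp at hcs
    nlinarith [hcs]
  · exact ⟨a, Set.left_mem_uIcc, by simp [bregmanF, hab]⟩
  · obtain ⟨c, hc, hcs⟩ := exists_hasDerivAt_eq_slope (fun y : ℝ => |y| ^ p)
      (fun y => p * sgnPow y (p - 1)) hab hcont.continuousOn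
      (fun y _ => hasDerivAt_abs_rpow' hp y)
    refine ⟨c, ?_, ?_⟩
    · exact Set.Icc_subset_uIcc' (Set.Ioo_subset_Icc_self hc)
    have hba : a - b ≠ 0 := sub_ne_zero.mpr hab.ne'
    rw [bregmanF]
    field_simp at hcs
    nlinarith [hcs]

lemma bregman_abs_le_of_le_two {p : ℝ} (hp : 1 < p) (hp2 : p ≤ 2) (a b : ℝ) :
    |bregmanF p a b| ≤ 2 * p * |b - a| ^ p := by
  obtain ⟨c, hc, heq⟩ := bregmanF_exists_mvt hp a b
  have hca : |c - a| ≤ |b - a| := abs_sub_le_of_mem_uIcc hc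
  have hp0 : (0:ℝ) ≤ p := by linarith
  have h1 : |sgnPow c (p-1) - sgnPow a (p-1)| ≤ 2 * |c - a| ^ (p-1) :=
    sgnPow_sub_le (by linarith) (by linarith) c a
  have h2 : |c - a| ^ (p-1) ≤ |b - a| ^ (p-1) :=
    Real.rpow_le_rpow (abs_nonneg _) hca (by linarith)
  have h3 : |b - a| ^ (p - 1) * |b - a| = |b - a| ^ p := by
    nth_rewrite 2 [← Real.rpow_one |b - a|]
    rw [← Real.rpow_add' (abs_nonneg _) (by linarith : p - 1 + 1 ≠ 0)]
    norm_num
  calc |bregmanF p a b| = p * |sgnPow c (p-1) - sgnPow a (p-1)| * |b - a| := by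
        rw [heq, abs_mul, abs_mul, abs_of_pos (by linarith : (0:ℝ) < p)]
    _ ≤ p * (2 * |b - a| ^ (p-1)) * |b - a| := by
        gcongr
        exact h1.trans (by linarith)
    _ = 2 * p * (|b - a| ^ (p - 1) * |b - a|) := by ring
    _ = 2 * p * |b - a| ^ p := by rw [h3]

lemma two_mul_rpow_le {r s t : ℝ} (hr : 0 ≤ r) (hs : 0 ≤ s) (ht : 0 ≤ t) :
    (s + t) ^ r ≤ 2 ^ r * (s ^ r + t ^ r) := by
  have h1 : s + t ≤ 2 * max s t := by
    rcases le_total s t with h | h <;> simp [max_eq_right, max_eq_left, h] <;> linarith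
  have h2 : (s + t) ^ r ≤ (2 * max s t) ^ r :=
    Real.rpow_le_rpow (by linarith) h1 hr
  have h3 : (2 * max s t) ^ r = 2 ^ r * (max s t) ^ r :=
    Real.mul_rpow (by norm_num) (le_max_iff.mpr (Or.inl hs))
  have h4 : (max s t) ^ r ≤ s ^ r + t ^ r := by
    rcases max_cases s t with ⟨h, _⟩ | ⟨h, _⟩ <;> rw [h]
    · nlinarith [Real.rpow_nonneg ht r]
    · nlinarith [Real.rpow_nonneg hs r]
  calc (s + t) ^ r ≤ 2 ^ r * (max s t) ^ r := by rw [← h3]; exact h2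
    _ ≤ 2 ^ r * (s ^ r + t ^ r) := by
        have : (0:ℝ) ≤ 2 ^ r := Real.rpow_nonneg (by norm_num) r
        nlinarith

lemma bregman_abs_le_of_two_le {p : ℝ} (hp2 : 2 ≤ p) (a b : ℝ) :
    |bregmanF p a b| ≤
      p * p * 2 ^ (p - 2) * (|a| ^ (p - 2) * |b - a| ^ (2:ℝ) + |b - a| ^ p) := by
  have hp : 1 < p := by linarith
  have hp0 : (0:ℝ) ≤ p := by linarith
  obtain ⟨c, hc, heq⟩ := bregmanF_exists_mvt hp a b
  have hca : |c - a| ≤ |b - a| := abs_sub_le_of_mem_uIcc hc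
  have h1 : |sgnPow c (p-1) - sgnPow a (p-1)| ≤
      (p-1) * (|a| + |c - a|) ^ (p - 2) * |c - a| := by
    have h := sgnPow_sub_le' (q := p - 1) (by linarith) a c
    rw [abs_sub_comm]
    convert h using 3 <;> ring
  have hstep : |sgnPow c (p-1) - sgnPow a (p-1)| ≤
      (p-1) * (|a| + |b - a|) ^ (p - 2) * |b - a| := by
    refine h1.trans ?_
    have e1 : (|a| + |c - a|) ^ (p - 2) ≤ (|a| + |b - a|) ^ (p - 2) :=
      Real.rpow_le_rpow (by positivity) (by linarith) (by linarith)
    have e2 : (0:ℝ) ≤ p - 1 := by linarith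
    have e3 : (0:ℝ) ≤ (|a| + |b - a|) ^ (p - 2) := Real.rpow_nonneg (by positivity) _
    exact mul_le_mul (mul_le_mul_of_nonneg_left e1 e2) hca (abs_nonneg _) (mul_nonneg e2 e3)
  have h3 : (|a| + |b - a|) ^ (p - 2) ≤ 2 ^ (p-2) * (|a| ^ (p-2) + |b - a| ^ (p-2)) :=
    two_mul_rpow_le (by linarith) (abs_nonneg _) (abs_nonneg _)
  have hsq : |b - a| ^ (2:ℝ) = |b - a| * |b - a| := by
    rw [show ((2:ℝ)) = ((2:ℕ):ℝ) by norm_num, Real.rpow_natCast]; ring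
  have hpp : |b - a| ^ (p - 2) * |b - a| ^ (2:ℝ) = |b - a| ^ p := by
    rw [← Real.rpow_add' (abs_nonneg _) (by linarith : p - 2 + 2 ≠ 0)]; norm_num
  calc |bregmanF p a b| = p * |sgnPow c (p-1) - sgnPow a (p-1)| * |b - a| := by
        rw [heq, abs_mul, abs_mul, abs_of_pos (by linarith : (0:ℝ) < p)]
    _ ≤ p * ((p-1) * (|a| + |b - a|) ^ (p - 2) * |b - a|) * |b - a| := by gcongr
    _ ≤ p * (p * (2 ^ (p-2) * (|a| ^ (p-2) + |b - a| ^ (p-2))) * |b - a|) * |b - a| := by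
        have e3 : (0:ℝ) ≤ (|a| + |b - a|) ^ (p - 2) := Real.rpow_nonneg (by positivity) _
        have h2r : (0:ℝ) ≤ 2 ^ (p-2) * (|a| ^ (p-2) + |b - a| ^ (p-2)) := by
          have : (0:ℝ) ≤ |a| ^ (p-2) := Real.rpow_nonneg (abs_nonneg _) _
          have : (0:ℝ) ≤ |b - a| ^ (p-2) := Real.rpow_nonneg (abs_nonneg _) _
          have : (0:ℝ) ≤ (2:ℝ) ^ (p-2) := Real.rpow_nonneg (by norm_num) _
          positivity
        have hS : (p-1) * ((|a| + |b - a|) ^ (p - 2)) ≤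
            p * (2 ^ (p-2) * (|a| ^ (p-2) + |b - a| ^ (p-2))) := by
          have m1 := mul_le_mul_of_nonneg_left h3 (show (0:ℝ) ≤ p - 1 by linarith)
          have m2 := mul_le_mul_of_nonneg_right (show p - 1 ≤ p by linarith) h2r
          linarith
        have m3 := mul_le_mul_of_nonneg_right hS (abs_nonneg (b - a))
        have m4 := mul_le_mul_of_nonneg_left m3 hp0
        have m5 := mul_le_mul_of_nonneg_right m4 (abs_nonneg (b - a))
        calc p * ((p-1) * (|a| + |b - a|) ^ (p - 2) * |b - a|) * |b - a|
            = p * ((p-1) * ((|a| + |b - a|) ^ (p - 2)) * |b - a|) * |b - a| := by ring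
          _ ≤ p * (p * (2 ^ (p-2) * (|a| ^ (p-2) + |b - a| ^ (p-2))) * |b - a|) * |b - a| := m5
    _ = p * p * 2 ^ (p - 2) * (|a| ^ (p - 2) * (|b - a| * |b - a|)
          + |b - a| ^ (p-2) * (|b - a| * |b - a|)) := by ring
    _ = p * p * 2 ^ (p - 2) * (|a| ^ (p - 2) * |b - a| ^ (2:ℝ) + |b - a| ^ p) := by
        rw [← hsq, hpp]

/-- Unified Bregman bound with `q = min p 2`. -/
lemma bregman_bound {p : ℝ} (hp : 1 < p) (a b : ℝ) :
    |bregmanF p a b| ≤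
      p * p * 2 ^ p * (|a| ^ (p - min p 2) * |b - a| ^ (min p 2) + |b - a| ^ p) := by
  have h2p : (0:ℝ) ≤ 2 ^ p := Real.rpow_nonneg (by norm_num) p
  have h2p1 : (1:ℝ) ≤ 2 ^ p := by
    calc (1:ℝ) = 2 ^ (0:ℝ) := (Real.rpow_zero 2).symm
      _ ≤ 2 ^ p := Real.rpow_le_rpow_of_exponent_le (by norm_num) (by linarith)
  have hXp : (0:ℝ) ≤ |b - a| ^ p := Real.rpow_nonneg (abs_nonneg _) p
  rcases le_total p 2 with hp2 | hp2
  · rw [min_eq_left hp2, sub_self, Real.rpow_zero, one_mul]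
    have h := bregman_abs_le_of_le_two hp hp2 a b
    have hc : 2 * p ≤ 2 * (p * p * 2 ^ p) := by nlinarith
    nlinarith [mul_le_mul_of_nonneg_right hc hXp]
  · rw [min_eq_right hp2]
    have h := bregman_abs_le_of_two_le hp2 a b
    have h22 : (2:ℝ) ^ (p - 2) ≤ 2 ^ p :=
      Real.rpow_le_rpow_of_exponent_le (by norm_num) (by linarith)
    have ha2 : (0:ℝ) ≤ |a| ^ (p - 2) := Real.rpow_nonneg (abs_nonneg _) _
    have hb2 : (0:ℝ) ≤ |b - a| ^ (2:ℝ) := Real.rpow_nonneg (abs_nonneg _) _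
    have hS : (0:ℝ) ≤ |a| ^ (p - 2) * |b - a| ^ (2:ℝ) + |b - a| ^ p :=
      add_nonneg (mul_nonneg ha2 hb2) hXp
    have hm := mul_le_mul_of_nonneg_right h22 hS
    nlinarith [mul_le_mul_of_nonneg_left hm (mul_nonneg (by linarith : (0:ℝ) ≤ p) (by linarith : (0:ℝ) ≤ p))]

lemma eLp_ofReal_eq {X : Type*} [MeasurableSpace X] {μ : Measure X} {p : ℝ} (hp0 : 0 < p)
    (f : X → ℝ) :
    eLpNorm f (ENNReal.ofReal p) μ = (∫⁻ x, (‖f x‖₊ : ℝ≥0∞) ^ p ∂μ) ^ (1/p) := by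
  rw [eLpNorm_eq_lintegral_rpow_nnnorm (by simpa using not_le.mpr hp0 : ENNReal.ofReal p ≠ 0)
      ENNReal.ofReal_ne_top, ENNReal.toReal_ofReal hp0.le]

lemma lint_nnnorm_rpow {X : Type*} [MeasurableSpace X] {μ : Measure X} {p : ℝ} (hp0 : 0 < p)
    (f : X → ℝ) :
    ∫⁻ x, (‖f x‖₊ : ℝ≥0∞) ^ p ∂μ = (eLpNorm f (ENNReal.ofReal p) μ) ^ p := by
  rw [eLp_ofReal_eq hp0, ← ENNReal.rpow_mul, one_div, inv_mul_cancel₀ hp0.ne', ENNReal.rpow_one]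

lemma lintegral_rpow_mul_rpow_le {X : Type*} [MeasurableSpace X] (μ : Measure X) {p q : ℝ}
    (hq0 : 0 < q) (hqp : q ≤ p) {A B : X → ℝ≥0∞} (hA : AEMeasurable A μ) (hB : AEMeasurable B μ) :
    ∫⁻ x, A x ^ (p - q) * B x ^ q ∂μ ≤
      (∫⁻ x, A x ^ p ∂μ) ^ ((p - q)/p) * (∫⁻ x, B x ^ p ∂μ) ^ (q/p) := by
  rcases eq_or_lt_of_le hqp with rfl | hlt
  · simp [ENNReal.rpow_zero, div_self hq0.ne', ENNReal.rpow_one]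
  · have hp0 : (0:ℝ) < p := lt_trans hq0 hlt
    have hpq0 : (0:ℝ) < p - q := by linarith
    have hconj : (p/(p-q)).HolderConjugate (p/q) := by
      rw [Real.holderConjugate_iff]
      constructor
      · rw [lt_div_iff₀ hpq0]; linarith
      · rw [show (p/(p-q))⁻¹ = (p-q)/p by rw [inv_div], show (p/q)⁻¹ = q/p by rw [inv_div]]
        field_simp
        ring
    have h := ENNReal.lintegral_mul_le_Lp_mul_Lq μ hconj
      (f := fun x => A x ^ (p - q)) (g := fun x => B x ^ q)
      (hA.pow (aemeasurable_const : AEMeasurable (fun _ => p - q) μ))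
      (hB.pow (aemeasurable_const : AEMeasurable (fun _ => q) μ))
    simp only [Pi.mul_apply] at h
    have e1 : ∀ x, (A x ^ (p - q)) ^ (p/(p-q)) = A x ^ p := by
      intro x
      rw [← ENNReal.rpow_mul]
      congr 1
      field_simp
    have e2 : ∀ x, (B x ^ q) ^ (p/q) = B x ^ p := by
      intro x
      rw [← ENNReal.rpow_mul]
      congr 1
      field_simp
    simp only [e1, e2] at h
    rw [show 1/(p/(p-q)) = (p-q)/p by rw [one_div_div],
        show 1/(p/q) = q/p by rw [one_div_div]] at h
    exact h

lemma measurable_sgnPow (k : ℝ) : Measurable fun a : ℝ => sgnPow a k := by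
  have hsign : Measurable Real.sign := by
    have : Real.sign = fun r : ℝ => if r < 0 then (-1:ℝ) else if 0 < r then 1 else 0 := by
      funext r; rfl
    rw [this]
    exact Measurable.ite (measurableSet_lt measurable_id measurable_const) measurable_const
      (Measurable.ite (measurableSet_lt measurable_const measurable_id) measurable_const
        measurable_const)
  exact (continuous_abs.measurable.pow measurable_const).mul hsign

end AuxLemmas

/-- Differentiability of the `p`-th power in `L^1`: if `t ↦ u(t)` is differentiable
at `t ≥ 0` in `L^p` with derivative `w`, then `t ↦ |u(t)|^p` is differentiable at `t`
in `L^1` with derivative `p u(t)^⟨p-1⟩ w`. -/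
theorem abs_pow_differentiable_L1 {X : Type*} [MeasurableSpace X] (μ : Measure X)
    (p : ℝ) (hp : 1 < p) (t : ℝ) (ht : 0 ≤ t)
    (u : ℝ → X → ℝ) (w : X → ℝ)
    (hu : ∀ s, 0 ≤ s → MemLp (u s) (ENNReal.ofReal p) μ)
    (hw : MemLp w (ENNReal.ofReal p) μ)
    (hdiff : Tendsto (fun h : ℝ => eLpNorm
        (fun x => (u (t + h) x - u t x) / h - w x) (ENNReal.ofReal p) μ)
      (𝓝[{h : ℝ | h ≠ 0 ∧ 0 ≤ t + h}] 0) (𝓝 0)) :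
    Tendsto (fun h : ℝ => eLpNorm
        (fun x => (|u (t + h) x| ^ p - |u t x| ^ p) / h -
          p * sgnPow (u t x) (p - 1) * w x) 1 μ)
      (𝓝[{h : ℝ | h ≠ 0 ∧ 0 ≤ t + h}] 0) (𝓝 0) := by
  classical
  have hp0 : (0:ℝ) < p := by linarith
  have hp0' : p ≠ 0 := hp0.ne'
  set l := 𝓝[{h : ℝ | h ≠ 0 ∧ 0 ≤ t + h}] (0:ℝ) with hl
  set q : ℝ := min p 2 with hqdef
  have hq1 : 1 < q := lt_min hp one_lt_two
  have hqp : q ≤ p := min_le_left _ _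
  have hq0 : (0:ℝ) < q := by linarith
  set C : ℝ := p * p * 2 ^ p with hCdef
  have hC0 : 0 < C := by
    have := Real.rpow_pos_of_pos (show (0:ℝ) < 2 by norm_num) p
    positivity
  have hP0 : (ENNReal.ofReal p) ≠ 0 := by
    simpa using not_le.mpr hp0
  have hPtop : (ENNReal.ofReal p) ≠ ⊤ := ENNReal.ofReal_ne_top
  have hP1 : (1:ℝ≥0∞) ≤ ENNReal.ofReal p := by
    rw [← ENNReal.ofReal_one]
    exact ENNReal.ofReal_le_ofReal hp.le
  -- abbreviations
  set g : ℝ → X → ℝ := fun h x => (u (t + h) x - u t x) / h - w x with hgdef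
  set G : ℝ → ℝ≥0∞ := fun h => eLpNorm (g h) (ENNReal.ofReal p) μ with hGdef
  have hdiff' : Tendsto G l (𝓝 0) := hdiff
  set U : ℝ≥0∞ := eLpNorm (u t) (ENNReal.ofReal p) μ with hUdef
  have hU : U ≠ ⊤ := (hu t ht).2.ne
  set W : ℝ≥0∞ := eLpNorm w (ENNReal.ofReal p) μ with hWdef
  have hW : W ≠ ⊤ := hw.2.ne
  set M : ℝ≥0∞ := 1 + W with hMdef
  have hM : M ≠ ⊤ := by
    rw [hMdef]
    exact ENNReal.add_ne_top.mpr ⟨ENNReal.one_ne_top, hW⟩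
  -- measurability of base functions
  have haut : AEMeasurable (u t) μ := (hu t ht).aestronglyMeasurable.aemeasurable
  have hwm : AEMeasurable w μ := hw.aestronglyMeasurable.aemeasurable
  have hAm : AEMeasurable (fun x => sgnPow (u t x) (p - 1)) μ :=
    (measurable_sgnPow (p - 1)).comp_aemeasurable haut
  have hAnn : AEMeasurable (fun x => (‖sgnPow (u t x) (p - 1)‖₊ : ℝ≥0∞)) μ :=
    hAm.ennnorm
  have hautnn : AEMeasurable (fun x => (‖u t x‖₊ : ℝ≥0∞)) μ := haut.ennnorm
  have hpm1 : (0:ℝ) < p - 1 := by linarith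
  -- the finite constant from Hölder applied to sgnPow (u t)
  set KA : ℝ≥0∞ :=
    (∫⁻ x, (‖sgnPow (u t x) (p - 1)‖₊ : ℝ≥0∞) ^ (p/(p-1)) ∂μ) ^ (1/(p/(p-1))) with hKAdef
  have hKAle : ∀ x, (‖sgnPow (u t x) (p - 1)‖₊ : ℝ≥0∞) ^ (p/(p-1)) ≤ (‖u t x‖₊ : ℝ≥0∞) ^ p := by
    intro x
    have h1 : (‖sgnPow (u t x) (p - 1)‖₊ : ℝ≥0∞) ≤ (‖u t x‖₊ : ℝ≥0∞) ^ (p - 1) := by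
      have h2 := ENNReal.ofReal_le_ofReal (abs_sgnPow_le (u t x) (p - 1))
      rw [← ENNReal.ofReal_rpow_of_nonneg (abs_nonneg _) (by linarith : (0:ℝ) ≤ p - 1)] at h2
      simpa [← ofReal_norm_eq_coe_nnnorm, Real.norm_eq_abs] using h2
    calc (‖sgnPow (u t x) (p - 1)‖₊ : ℝ≥0∞) ^ (p/(p-1))
        ≤ ((‖u t x‖₊ : ℝ≥0∞) ^ (p - 1)) ^ (p/(p-1)) :=
          ENNReal.rpow_le_rpow h1 (div_nonneg hp0.le (by linarith))
      _ = (‖u t x‖₊ : ℝ≥0∞) ^ p := by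
          rw [← ENNReal.rpow_mul]
          congr 1
          field_simp
  have hKA : KA ≠ ⊤ := by
    have hle : (∫⁻ x, (‖sgnPow (u t x) (p - 1)‖₊ : ℝ≥0∞) ^ (p/(p-1)) ∂μ)
        ≤ U ^ p := by
      rw [hUdef, ← lint_nnnorm_rpow hp0]
      exact lintegral_mono hKAle
    have hfin : (U : ℝ≥0∞) ^ p ≠ ⊤ := ENNReal.rpow_ne_top_of_nonneg hp0.le hU
    rw [hKAdef]
    exact ENNReal.rpow_ne_top_of_nonneg (one_div_nonneg.mpr (div_nonneg hp0.le (by linarith)))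
      (lt_of_le_of_lt hle (lt_top_iff_ne_top.mpr hfin)).ne
  set C2 : ℝ≥0∞ := ENNReal.ofReal p * KA with hC2def
  have hC2 : C2 ≠ ⊤ := ENNReal.mul_ne_top ENNReal.ofReal_ne_top hKA
  -- conjugate exponents for the derivative term
  have hconj2 : (p/(p-1)).HolderConjugate p := by
    rw [Real.holderConjugate_iff]
    constructor
    · rw [lt_div_iff₀ hpm1]; linarith
    · rw [show (p/(p-1))⁻¹ = (p-1)/p by rw [inv_div]]
      field_simp
      ring
  -- the bounding function
  set Φ : ℝ → ℝ≥0∞ := fun h =>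
    ENNReal.ofReal C * (ENNReal.ofReal (|h| ^ (q-1)) * (U ^ (p - q) * M ^ q)
      + ENNReal.ofReal (|h| ^ (p-1)) * M ^ p) + C2 * G h with hΦdef
  have hΦ0 : Tendsto Φ l (𝓝 0) := by
    have hof : ∀ r : ℝ, 0 < r →
        Tendsto (fun h : ℝ => ENNReal.ofReal (|h| ^ r)) l (𝓝 0) := by
      intro r hr
      have h1 : Tendsto (fun h : ℝ => |h| ^ r) l (𝓝 0) :=
        (tendsto_abs_rpow_zero hr).mono_left nhdsWithin_le_nhds
      simpa using ENNReal.tendsto_ofReal h1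
    have t1 : Tendsto (fun h : ℝ => ENNReal.ofReal (|h| ^ (q-1)) * (U ^ (p - q) * M ^ q))
        l (𝓝 0) := by
      have hfin : U ^ (p - q) * M ^ q ≠ ⊤ :=
        ENNReal.mul_ne_top (ENNReal.rpow_ne_top_of_nonneg (by linarith) hU)
          (ENNReal.rpow_ne_top_of_nonneg hq0.le hM)
      simpa using ENNReal.Tendsto.mul_const (hof _ (by linarith)) (Or.inr hfin)
    have t2 : Tendsto (fun h : ℝ => ENNReal.ofReal (|h| ^ (p-1)) * M ^ p) l (𝓝 0) := by
      have hfin : M ^ p ≠ ⊤ := ENNReal.rpow_ne_top_of_nonneg hp0.le hM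
      simpa using ENNReal.Tendsto.mul_const (hof _ hpm1) (Or.inr hfin)
    have t12 : Tendsto (fun h : ℝ => ENNReal.ofReal C * (ENNReal.ofReal (|h| ^ (q-1)) *
        (U ^ (p - q) * M ^ q) + ENNReal.ofReal (|h| ^ (p-1)) * M ^ p)) l (𝓝 0) := by
      have := (t1.add t2)
      have h2 := ENNReal.Tendsto.const_mul (a := ENNReal.ofReal C) (by simpa using this)
        (Or.inr ENNReal.ofReal_ne_top)
      simpa using h2
    have t3 : Tendsto (fun h : ℝ => C2 * G h) l (𝓝 0) := by
      have h2 := ENNReal.Tendsto.const_mul (a := C2) hdiff' (Or.inr hC2)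
      simpa using h2
    simpa using t12.add t3
  -- eventual bound
  have hG1 : ∀ᶠ h in l, G h ≤ 1 :=
    eventually_le_of_tendsto_lt (by norm_num : (0:ℝ≥0∞) < 1) hdiff'
  have key : ∀ᶠ h in l, eLpNorm
      (fun x => (|u (t + h) x| ^ p - |u t x| ^ p) / h -
        p * sgnPow (u t x) (p - 1) * w x) 1 μ ≤ Φ h := by
    filter_upwards [self_mem_nhdsWithin, hG1] with h hhS hG1h
    obtain ⟨hh0, hth⟩ := hhS
    have habs : (0:ℝ) < |h| := abs_pos.mpr hh0
    have hauth : AEMeasurable (u (t + h)) μ := (hu _ hth).aestronglyMeasurable.aemeasurable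
    have hgm : AEMeasurable (g h) μ := ((hauth.sub haut).div_const h).sub hwm
    set gw : X → ℝ := fun x => g h x + w x with hgwdef
    have hgwm : AEMeasurable gw μ := hgm.add hwm
    have hgwnn : AEMeasurable (fun x => (‖gw x‖₊ : ℝ≥0∞)) μ := hgwm.ennnorm
    have hgweq : ∀ x, u (t + h) x - u t x = h * gw x := by
      intro x
      rw [hgwdef]
      simp only [hgdef]
      field_simp
      ring
    set E : ℝ≥0∞ := eLpNorm gw (ENNReal.ofReal p) μ with hEdef
    have hEle : E ≤ M := by
      rw [hEdef, hMdef]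
      refine le_trans (eLpNorm_add_le hgm.aestronglyMeasurable hw.aestronglyMeasurable hP1) ?_
      exact add_le_add hG1h le_rfl
    have hEp : ∫⁻ x, (‖gw x‖₊ : ℝ≥0∞) ^ p ∂μ = E ^ p := lint_nnnorm_rpow hp0 gw
    -- pointwise split
    have hsplit : (fun x => (|u (t + h) x| ^ p - |u t x| ^ p) / h -
          p * sgnPow (u t x) (p - 1) * w x)
        = fun x => bregmanF p (u t x) (u (t + h) x) / h
            + p * sgnPow (u t x) (p - 1) * g h x := by
      funext x
      simp only [bregmanF, hgdef]
      field_simp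
      ring
    rw [hsplit, eLpNorm_one_eq_lintegral_nnnorm]
    have hF1m : AEMeasurable (fun x => bregmanF p (u t x) (u (t + h) x) / h) μ := by
      have h1 : AEMeasurable (fun x => |u (t + h) x| ^ p) μ :=
        (continuous_abs.measurable.pow measurable_const).comp_aemeasurable hauth
      have h2 : AEMeasurable (fun x => |u t x| ^ p) μ :=
        (continuous_abs.measurable.pow measurable_const).comp_aemeasurable haut
      exact (((h1.sub h2).sub ((hAm.const_mul p).mul (hauth.sub haut))).div_const h)
    have hF2m : AEMeasurable (fun x => p * sgnPow (u t x) (p - 1) * g h x) μ :=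
      (hAm.const_mul p).mul hgm
    -- triangle inequality
    have hstep1 : ∫⁻ x, (‖bregmanF p (u t x) (u (t + h) x) / h
          + p * sgnPow (u t x) (p - 1) * g h x‖₊ : ℝ≥0∞) ∂μ
        ≤ (∫⁻ x, (‖bregmanF p (u t x) (u (t + h) x) / h‖₊ : ℝ≥0∞) ∂μ)
          + ∫⁻ x, (‖p * sgnPow (u t x) (p - 1) * g h x‖₊ : ℝ≥0∞) ∂μ := by
      calc ∫⁻ x, (‖bregmanF p (u t x) (u (t + h) x) / h
            + p * sgnPow (u t x) (p - 1) * g h x‖₊ : ℝ≥0∞) ∂μ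
          ≤ ∫⁻ x, ((‖bregmanF p (u t x) (u (t + h) x) / h‖₊ : ℝ≥0∞)
            + (‖p * sgnPow (u t x) (p - 1) * g h x‖₊ : ℝ≥0∞)) ∂μ := by
            refine lintegral_mono fun x => ?_
            rw [← ENNReal.coe_add]
            exact ENNReal.coe_le_coe.mpr (nnnorm_add_le _ _)
        _ = _ := lintegral_add_left' hF1m.ennnorm _
    refine le_trans hstep1 ?_
    rw [hΦdef]
    have hI2 : ∫⁻ x, (‖p * sgnPow (u t x) (p - 1) * g h x‖₊ : ℝ≥0∞) ∂μ ≤ C2 * G h := by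
      have hpt : ∀ x, (‖p * sgnPow (u t x) (p - 1) * g h x‖₊ : ℝ≥0∞)
          = ENNReal.ofReal p * ((‖sgnPow (u t x) (p - 1)‖₊ : ℝ≥0∞) * (‖g h x‖₊ : ℝ≥0∞)) := by
        intro x
        rw [← ofReal_norm_eq_coe_nnnorm, ← ofReal_norm_eq_coe_nnnorm,
          ← ofReal_norm_eq_coe_nnnorm, norm_mul, norm_mul, Real.norm_eq_abs p,
          abs_of_pos hp0, ENNReal.ofReal_mul (by positivity), ENNReal.ofReal_mul hp0.le]
        ring
      simp_rw [hpt]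
      rw [lintegral_const_mul' _ _ ENNReal.ofReal_ne_top]
      have hhold := ENNReal.lintegral_mul_le_Lp_mul_Lq μ hconj2
        (f := fun x => (‖sgnPow (u t x) (p - 1)‖₊ : ℝ≥0∞))
        (g := fun x => (‖g h x‖₊ : ℝ≥0∞)) hAnn hgm.ennnorm
      simp only [Pi.mul_apply] at hhold
      have hgnorm : (∫⁻ x, (‖g h x‖₊ : ℝ≥0∞) ^ p ∂μ) ^ (1/p) = G h :=
        (eLp_ofReal_eq hp0 (g h)).symm
      rw [hC2def, hKAdef, mul_assoc]
      refine mul_le_mul_left' ?_ _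
      calc ∫⁻ x, (‖sgnPow (u t x) (p - 1)‖₊ : ℝ≥0∞) * (‖g h x‖₊ : ℝ≥0∞) ∂μ
          ≤ (∫⁻ x, (‖sgnPow (u t x) (p - 1)‖₊ : ℝ≥0∞) ^ (p/(p-1)) ∂μ) ^ (1/(p/(p-1)))
            * (∫⁻ x, (‖g h x‖₊ : ℝ≥0∞) ^ p ∂μ) ^ (1/p) := hhold
        _ = _ := by rw [hgnorm]
    -- the Bregman part
    have hptw : ∀ x, |bregmanF p (u t x) (u (t + h) x) / h| ≤
        C * (|h| ^ (q-1) * (|u t x| ^ (p - q) * |gw x| ^ q) + |h| ^ (p-1) * |gw x| ^ p) := by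
      intro x
      have hbb := bregman_bound hp (u t x) (u (t + h) x)
      rw [← hqdef, ← hCdef] at hbb
      have hd : u (t + h) x - u t x = h * gw x := hgweq x
      rw [abs_div, div_le_iff₀ habs]
      have habsm : |h * gw x| = |h| * |gw x| := abs_mul _ _
      have heq : |u (t + h) x - u t x| = |h| * |gw x| := by rw [hd, habsm]
      have heq1 : |h| ^ q = |h| ^ (q-1) * |h| := by
        nth_rewrite 1 [show q = q - 1 + 1 by ring]
        exact Real.rpow_add_one habs.ne' (q - 1)
      have heq2 : |h| ^ p = |h| ^ (p-1) * |h| := by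
        nth_rewrite 1 [show p = p - 1 + 1 by ring]
        exact Real.rpow_add_one habs.ne' (p - 1)
      calc |bregmanF p (u t x) (u (t + h) x)|
          ≤ C * (|u t x| ^ (p - q) * |u (t + h) x - u t x| ^ q
            + |u (t + h) x - u t x| ^ p) := hbb
        _ = C * (|u t x| ^ (p - q) * (|h| ^ q * |gw x| ^ q) + |h| ^ p * |gw x| ^ p) := by
            rw [heq, Real.mul_rpow (abs_nonneg _) (abs_nonneg _),
              Real.mul_rpow (abs_nonneg _) (abs_nonneg _)]
        _ = C * (|h| ^ (q-1) * (|u t x| ^ (p - q) * |gw x| ^ q)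
            + |h| ^ (p-1) * |gw x| ^ p) * |h| := by
            rw [heq1, heq2]; ring
    have hptw2 : ∀ x, (‖bregmanF p (u t x) (u (t + h) x) / h‖₊ : ℝ≥0∞) ≤
        ENNReal.ofReal C * (ENNReal.ofReal (|h| ^ (q-1))
            * ((‖u t x‖₊ : ℝ≥0∞) ^ (p - q) * (‖gw x‖₊ : ℝ≥0∞) ^ q)
          + ENNReal.ofReal (|h| ^ (p-1)) * (‖gw x‖₊ : ℝ≥0∞) ^ p) := by
      intro x
      have hofr : ∀ (y r : ℝ), 0 ≤ r → ENNReal.ofReal (|y| ^ r) = (‖y‖₊ : ℝ≥0∞) ^ r := by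
        intro y r hr
        rw [← ENNReal.ofReal_rpow_of_nonneg (abs_nonneg y) hr, ← Real.norm_eq_abs,
          ofReal_norm_eq_coe_nnnorm]
      rw [← ofReal_norm_eq_coe_nnnorm, Real.norm_eq_abs]
      refine le_trans (ENNReal.ofReal_le_ofReal (hptw x)) (le_of_eq ?_)
      rw [ENNReal.ofReal_mul hC0.le,
        ENNReal.ofReal_add (mul_nonneg (by positivity) (by positivity))
          (mul_nonneg (by positivity) (by positivity)),
        ENNReal.ofReal_mul (by positivity : (0:ℝ) ≤ |h| ^ (q-1)),
        ENNReal.ofReal_mul (by positivity : (0:ℝ) ≤ |h| ^ (p-1)),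
        ENNReal.ofReal_mul (by positivity : (0:ℝ) ≤ |u t x| ^ (p - q)),
        hofr (u t x) (p - q) (by linarith), hofr (gw x) q hq0.le, hofr (gw x) p hp0.le,
        hofr h (q-1) (by linarith), hofr h (p-1) (by linarith)]
    have hI1 : ∫⁻ x, (‖bregmanF p (u t x) (u (t + h) x) / h‖₊ : ℝ≥0∞) ∂μ ≤
        ENNReal.ofReal C * (ENNReal.ofReal (|h| ^ (q-1)) * (U ^ (p - q) * E ^ q)
          + ENNReal.ofReal (|h| ^ (p-1)) * E ^ p) := by
      have hm1 : AEMeasurable (fun x => ENNReal.ofReal (|h| ^ (q-1))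
          * ((‖u t x‖₊ : ℝ≥0∞) ^ (p - q) * (‖gw x‖₊ : ℝ≥0∞) ^ q)) μ :=
        ((hautnn.pow (aemeasurable_const : AEMeasurable (fun _ => p - q) μ)).mul
          (hgwnn.pow (aemeasurable_const : AEMeasurable (fun _ => q) μ))).const_mul _
      calc ∫⁻ x, (‖bregmanF p (u t x) (u (t + h) x) / h‖₊ : ℝ≥0∞) ∂μ
          ≤ ∫⁻ x, ENNReal.ofReal C * (ENNReal.ofReal (|h| ^ (q-1))
              * ((‖u t x‖₊ : ℝ≥0∞) ^ (p - q) * (‖gw x‖₊ : ℝ≥0∞) ^ q)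
            + ENNReal.ofReal (|h| ^ (p-1)) * (‖gw x‖₊ : ℝ≥0∞) ^ p) ∂μ :=
            lintegral_mono hptw2
        _ = ENNReal.ofReal C * ((ENNReal.ofReal (|h| ^ (q-1))
              * ∫⁻ x, (‖u t x‖₊ : ℝ≥0∞) ^ (p - q) * (‖gw x‖₊ : ℝ≥0∞) ^ q ∂μ)
            + ENNReal.ofReal (|h| ^ (p-1)) * ∫⁻ x, (‖gw x‖₊ : ℝ≥0∞) ^ p ∂μ) := by
            rw [lintegral_const_mul' _ _ ENNReal.ofReal_ne_top,
              lintegral_add_left' hm1,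
              lintegral_const_mul' _ _ ENNReal.ofReal_ne_top,
              lintegral_const_mul' _ _ ENNReal.ofReal_ne_top]
        _ ≤ ENNReal.ofReal C * ((ENNReal.ofReal (|h| ^ (q-1)) * (U ^ (p - q) * E ^ q))
            + ENNReal.ofReal (|h| ^ (p-1)) * E ^ p) := by
            refine mul_le_mul_left' (add_le_add (mul_le_mul_left' ?_ _)
              (mul_le_mul_left' ?_ _)) _
            · calc ∫⁻ x, (‖u t x‖₊ : ℝ≥0∞) ^ (p - q) * (‖gw x‖₊ : ℝ≥0∞) ^ q ∂μ
                  ≤ (∫⁻ x, (‖u t x‖₊ : ℝ≥0∞) ^ p ∂μ) ^ ((p - q)/p)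
                    * (∫⁻ x, (‖gw x‖₊ : ℝ≥0∞) ^ p ∂μ) ^ (q/p) :=
                    lintegral_rpow_mul_rpow_le μ hq0 hqp hautnn hgwnn
                _ = U ^ (p - q) * E ^ q := by
                    rw [lint_nnnorm_rpow hp0, hEp, ← hUdef,
                      ← ENNReal.rpow_mul, ← ENNReal.rpow_mul]
                    congr 1 <;> congr 1 <;> field_simp
            · exact le_of_eq hEp
    refine le_trans (add_le_add hI1 hI2) ?_
    refine add_le_add ?_ le_rfl
    refine mul_le_mul_left' (add_le_add (mul_le_mul_left' ?_ _) (mul_le_mul_left' ?_ _)) _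
    · exact mul_le_mul_left' (ENNReal.rpow_le_rpow hEle hq0.le) _
    · exact ENNReal.rpow_le_rpow hEle hp0.le
  exact tendsto_of_tendsto_of_tendsto_of_le_of_le' tendsto_const_nhds hΦ0
    (Eventually.of_forall fun h => zero_le) key
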